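/- Let p, m, n be natural numbers. For each k ∈ {1,…,p}, let the polytope S_k = {y ∈ ℝⁿ : C_k y ≤ c_k} be given by C_k ∈ ℝ^{q_k×n} and c_k ∈ ℝ^{q_k}, and let the affine piece be f_k(y) = A_k y + b_k with A_k ∈ ℝ^{m×n}, b_k ∈ ℝ^{m}. Assume consistency: for all k, j and all y ∈ S_k ∩ S_j, A_k y + b_k = A_j y + b_j (so the piecewise affine function f with f(y) = A_k y + b_k for y ∈ S_k is well defined and continuous on S = ∪_k S_k). Let M ∈ ℝ satisfy |(A_k y + b_k)_j| ≤ M for all k ∈ {1,…,p}, all y ∈ S, and all j ∈ {1,…,m}. For x ∈ ℝⁿ define the layer outputs: δ_k(x) = ReLU( ∑_{i=1}^{q_k} BSF(−(C_k x)_i + (c_k)_i) − q_k + 1 ) for k = 1,…,p; Y_k(x) = ReLU( δ_k(x) − ∑_{l < k} δ_l(x) ) for k = 1,…,p; and for j = 1,…,m, out_j(x) = ∑_{k=1}^{p} [ ReLU(M·Y_k(x) + (A_k x + b_k)_j − M) − ReLU(M·Y_k(x) − (A_k x + b_k)_j − M) ]. Then for every x ∈ S = ∪_{k=1}^{p} S_k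 and every j, out_j(x) = f(x)_j; that is, the five-layer network exactly represents f on its whole domain without any training. -/

import Mathlib

/-- The binary step function: `1` if `t ≥ 0`, `0` otherwise. -/
noncomputable def BSF (t : ℝ) : ℝ := if 0 ≤ t then 1 else 0

/-- The rectified linear unit. -/
def ReLU (t : ℝ) : ℝ := max t 0

theorem yann_exactly_represents_piecewise_affine (p m n : ℕ)
    (q : Fin p → ℕ)
    (C : ∀ k : Fin p, Matrix (Fin (q k)) (Fin n) ℝ)
    (c : ∀ k : Fin p, Fin (q k) → ℝ)
    (A : Fin p → Matrix (Fin m) (Fin n) ℝ) (b : Fin p → Fin m → ℝ)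
    (S : Fin p → Set (Fin n → ℝ))
    (hS : ∀ k, S k = {y : Fin n → ℝ | ∀ i, (C k).mulVec y i ≤ c k i})
    (hconsist : ∀ (k k' : Fin p), ∀ y ∈ S k ∩ S k',
      (A k).mulVec y + b k = (A k').mulVec y + b k')
    (M : ℝ)
    (hM : ∀ (k : Fin p), ∀ y ∈ ⋃ k' : Fin p, S k', ∀ j : Fin m,
      |(A k).mulVec y j + b k j| ≤ M)
    (δ : Fin p → (Fin n → ℝ) → ℝ)
    (hδ : ∀ k x, δ k x
      = ReLU (∑ i, BSF (-((C k).mulVec x i) + c k i) - (q k : ℝ) + 1))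
    (Y : Fin p → (Fin n → ℝ) → ℝ)
    (hY : ∀ k x, Y k x = ReLU (δ k x - ∑ l ∈ Finset.Iio k, δ l x))
    (out : Fin m → (Fin n → ℝ) → ℝ)
    (hout : ∀ j x, out j x
      = ∑ k, (ReLU (M * Y k x + ((A k).mulVec x j + b k j) - M)
              - ReLU (M * Y k x - ((A k).mulVec x j + b k j) - M))) :
    ∀ x ∈ ⋃ k : Fin p, S k, ∀ (j : Fin m) (k : Fin p), x ∈ S k →
      out j x = (A k).mulVec x j + b k j := by
  classical
  intro x hx j k hk
  -- δ takes value 1 on S l, 0 otherwise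
  have hδ01 : ∀ l : Fin p, δ l x = if x ∈ S l then 1 else 0 := by
    intro l
    rw [hδ]
    by_cases h : x ∈ S l
    · rw [if_pos h]
      have hall : ∀ i, BSF (-((C l).mulVec x i) + c l i) = 1 := by
        intro i
        have hi : (C l).mulVec x i ≤ c l i := by
          rw [hS] at h; exact h i
        unfold BSF
        rw [if_pos (by linarith)]
      simp only [hall, Finset.sum_const, Finset.card_univ, Fintype.card_fin,
        nsmul_eq_mul, mul_one]
      unfold ReLU
      rw [max_eq_left (by linarith)]
      ring
    · rw [if_neg h]
      rw [hS] at h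
      simp only [Set.mem_setOf_eq] at h
      push_neg at h
      obtain ⟨i0, hi0⟩ := h
      have hbsf0 : BSF (-((C l).mulVec x i0) + c l i0) = 0 := by
        unfold BSF
        rw [if_neg (by linarith)]
      have hsum : ∑ i, BSF (-((C l).mulVec x i) + c l i) ≤ (q l : ℝ) - 1 := by
        rw [← Finset.add_sum_erase _ _ (Finset.mem_univ i0), hbsf0, zero_add]
        calc ∑ i ∈ Finset.univ.erase i0, BSF (-((C l).mulVec x i) + c l i)
            ≤ ∑ _i ∈ Finset.univ.erase i0, (1 : ℝ) := by
              apply Finset.sum_le_sum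
              intro i _
              unfold BSF
              split <;> norm_num
          _ = ((Finset.univ.erase i0).card : ℝ) := by simp
          _ = (q l : ℝ) - 1 := by
              rw [Finset.card_erase_of_mem (Finset.mem_univ i0),
                Finset.card_univ, Fintype.card_fin,
                Nat.cast_sub i0.pos, Nat.cast_one]
      unfold ReLU
      rw [max_eq_right (by linarith)]
  have hδnn : ∀ l, 0 ≤ δ l x := by
    intro l; rw [hδ01]; split <;> norm_num
  -- the least index k0 with x ∈ S k0
  obtain ⟨k0, hk0mem, hk0min⟩ :=
    Finset.exists_min_image (Finset.univ.filter (fun l => x ∈ S l)) id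
      ⟨k, by simp [hk]⟩
  have hk0S : x ∈ S k0 := (Finset.mem_filter.mp hk0mem).2
  simp only [id] at hk0min
  have hk0min' : ∀ l : Fin p, x ∈ S l → k0 ≤ l := by
    intro l hl
    exact hk0min l (by simp [hl])
  -- Y is the indicator of k0
  have hYval : ∀ l : Fin p, Y l x = if l = k0 then 1 else 0 := by
    intro l
    rw [hY]
    by_cases hl : l = k0
    · subst hl
      have hsum0 : ∑ l' ∈ Finset.Iio l, δ l' x = 0 := by
        apply Finset.sum_eq_zero
        intro l' hl'
        rw [hδ01, if_neg]
        intro hmem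
        exact absurd (hk0min' l' hmem) (not_le.mpr (Finset.mem_Iio.mp hl'))
      rw [hδ01, if_pos hk0S, hsum0, if_pos rfl]
      unfold ReLU
      rw [max_eq_left (by norm_num)]
      norm_num
    · rw [if_neg hl]
      rcases lt_or_gt_of_ne hl with hlt | hgt
      · have hδl0 : δ l x = 0 := by
          rw [hδ01, if_neg]
          intro hmem
          exact absurd (hk0min' l hmem) (not_le.mpr hlt)
        have hsumnn : 0 ≤ ∑ l' ∈ Finset.Iio l, δ l' x :=
          Finset.sum_nonneg fun l' _ => hδnn l'
        rw [hδl0]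
        unfold ReLU
        rw [max_eq_right (by linarith)]
      · have hsumge : 1 ≤ ∑ l' ∈ Finset.Iio l, δ l' x := by
          have h1 : δ k0 x = 1 := by rw [hδ01, if_pos hk0S]
          calc (1 : ℝ) = δ k0 x := h1.symm
            _ ≤ ∑ l' ∈ Finset.Iio l, δ l' x :=
              Finset.single_le_sum (fun l' _ => hδnn l') (Finset.mem_Iio.mpr hgt)
        have hδle : δ l x ≤ 1 := by rw [hδ01]; split <;> norm_num
        unfold ReLU
        rw [max_eq_right (by linarith)]
  -- evaluate the output
  have h1 : out j x = (A k0).mulVec x j + b k0 j := by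
    rw [hout]
    rw [Finset.sum_eq_single_of_mem k0 (Finset.mem_univ k0)]
    · rw [hYval k0, if_pos rfl]
      set g := (A k0).mulVec x j + b k0 j with hg
      have e1 : M * 1 + g - M = g := by ring
      have e2 : M * 1 - g - M = -g := by ring
      rw [e1, e2]
      unfold ReLU
      rcases le_total 0 g with h | h
      · rw [max_eq_left h, max_eq_right (by linarith)]; ring
      · rw [max_eq_right h, max_eq_left (by linarith)]; ring
    · intro k' _ hne
      rw [hYval k', if_neg hne]
      have hgbd := abs_le.mp (hM k' x hx j)
      set g := (A k').mulVec x j + b k' j with hg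
      have e1 : M * 0 + g - M = g - M := by ring
      have e2 : M * 0 - g - M = -g - M := by ring
      rw [e1, e2]
      unfold ReLU
      rw [max_eq_right (by linarith [hgbd.1, hgbd.2]),
        max_eq_right (by linarith [hgbd.1, hgbd.2])]
      ring
  have h2 := congrFun (hconsist k k0 x ⟨hk, hk0S⟩) j
  simp only [Pi.add_apply] at h2
  rw [h1, ← h2]
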